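/- arXiv:1906.09496 — 2 statements merged into one kernel-verified Lean document; each statement's English description precedes it below -/
import Mathlib

section
/- Call a morphism of schemes f : X ⟶ Y completely decomposed if for every point y of Y there exists a point x of X with f(x) = y such that the induced map of residue fields κ(y) ⟶ κ(x) is an isomorphism. Let f : X ⟶ Y be an étale, completely decomposed morphism of schemes and let g : Z ⟶ Y be any morphism of schemes. Then the base change pullback.snd : X ×_Y Z ⟶ Z is étale and completely decomposed. -/
set_option maxHeartbeats 1000000

open CategoryTheory Limits AlgebraicGeometry

/-- A morphism of schemes `f : X ⟶ Y` is completely decomposed if every point of `Y`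
is hit by a point of `X` with the same residue field. -/
def CompletelyDecomposed {X Y : Scheme} (f : X ⟶ Y) : Prop :=
  ∀ y : Y, ∃ x : X, f.base x = y ∧ IsIso (f.residueFieldMap x)

/-- Étale completely decomposed morphisms of schemes are stable under base change. -/
theorem completelyDecomposed_etale_stableUnderBaseChange {X Y Z : Scheme}
    (f : X ⟶ Y) [Etale f] (hf : CompletelyDecomposed f) (g : Z ⟶ Y) :
    Etale (pullback.snd f g) ∧ CompletelyDecomposed (pullback.snd f g) := by
  refine ⟨inferInstance, fun z => ?_⟩
  obtain ⟨x, hx, hiso⟩ := hf (g.base z)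
  let ψ : X.residueField x ⟶ Z.residueField z :=
    inv (f.residueFieldMap x) ≫ (Y.residueFieldCongr hx).hom ≫ g.residueFieldMap z
  have hψ : f.residueFieldMap x ≫ ψ =
      (Y.residueFieldCongr hx).hom ≫ g.residueFieldMap z := by
    simp [ψ]
  have comm : (Spec.map ψ ≫ X.fromSpecResidueField x) ≫ f =
      Z.fromSpecResidueField z ≫ g := by
    rw [Category.assoc, ← Scheme.Hom.SpecMap_residueFieldMap_fromSpecResidueField,
      ← Spec.map_comp_assoc, hψ, Spec.map_comp, Category.assoc,
      Scheme.residueFieldCongr_fromSpecResidueField,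
      Scheme.Hom.SpecMap_residueFieldMap_fromSpecResidueField]
  let φ : Spec (Z.residueField z) ⟶ pullback f g :=
    pullback.lift (Spec.map ψ ≫ X.fromSpecResidueField x) (Z.fromSpecResidueField z) comm
  have hφ : φ ≫ pullback.snd f g = Z.fromSpecResidueField z := pullback.lift_snd _ _ _
  set w := φ.base (IsLocalRing.closedPoint (Z.residueField z)) with hw
  have h1 : (pullback.snd f g).base w = z := by
    have := congrArg (fun m : Spec (Z.residueField z) ⟶ Z =>
      m.base (IsLocalRing.closedPoint (Z.residueField z))) hφ
    exact (Scheme.Hom.comp_apply _ _ _).symm.trans (this.trans (Scheme.fromSpecResidueField_apply _ _))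
  refine ⟨w, h1, ?_⟩
  -- factor `φ` through `Spec` of the residue field at `w`
  let u : (pullback f g).residueField w ⟶ Z.residueField z :=
    @Scheme.descResidueField _ _ _ _ (Scheme.stalkClosedPointTo φ) (Scheme.isLocalHom_stalkClosedPointTo φ)
  have hu : Spec.map u ≫ (pullback f g).fromSpecResidueField w = φ :=
    Scheme.descResidueField_stalkClosedPointTo_fromSpecResidueField _ _ φ
  have key : (pullback.snd f g).residueFieldMap w ≫ u = (Z.residueFieldCongr h1).hom := by
    rw [← Spec.map_inj]
    have : Spec.map u ≫ (pullback f g).fromSpecResidueField w ≫ pullback.snd f g =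
        Z.fromSpecResidueField z := by rw [← Category.assoc, hu, hφ]
    rw [← Scheme.Hom.SpecMap_residueFieldMap_fromSpecResidueField, ← Spec.map_comp_assoc] at this
    rw [← cancel_mono (Z.fromSpecResidueField ((pullback.snd f g).base w)), this,
      Scheme.residueFieldCongr_fromSpecResidueField]
  have hs : Function.Surjective ⇑((pullback.snd f g).residueFieldMap w ≫ u) := by
    rw [key]
    exact (ConcreteCategory.bijective_of_isIso _).2
  have hsu : Function.Surjective ⇑u := by
    intro c
    obtain ⟨a, ha⟩ := hs c
    exact ⟨_, ha⟩
  have hiu : IsIso u := by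
    rw [ConcreteCategory.isIso_iff_bijective]
    exact ⟨(show (pullback f g).residueField w →+* Z.residueField z from u.hom).injective, hsu⟩
  have : (pullback.snd f g).residueFieldMap w = (Z.residueFieldCongr h1).hom ≫ inv u := by
    rw [← key]
    simp
  rw [this]
  infer_instance
end

section
/- Call a morphism of schemes f : X ⟶ Y completely decomposed if for every point y of Y there exists a point x of X with f(x) = y such that the induced map of residue fields κ(y) ⟶ κ(x) is an isomorphism. If f : X ⟶ Y and g : Y ⟶ Z are both étale and completely decomposed morphisms of schemes, then the composite f ≫ g : X ⟶ Z is étale and completely decomposed. -/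
open CategoryTheory AlgebraicGeometry

/-- Étale completely decomposed morphisms of schemes are stable under composition. -/
theorem completelyDecomposed_etale_comp {X Y Z : Scheme}
    (f : X ⟶ Y) (g : Y ⟶ Z) [Etale f] [Etale g]
    (hf : CompletelyDecomposed f) (hg : CompletelyDecomposed g) :
    Etale (f ≫ g) ∧ CompletelyDecomposed (f ≫ g) := by
  refine ⟨inferInstance, fun z => ?_⟩
  obtain ⟨y, hy, hiy⟩ := hg z
  obtain ⟨x, hx, hix⟩ := hf y
  subst hx
  refine ⟨x, by simp [hy], ?_⟩
  rw [Scheme.residueFieldMap_comp]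
  exact IsIso.comp_isIso' hiy hix
end
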